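/- Let Z₁, Z₂, … be iid observations in ℝ^d with distribution P_Z whose support Q is compact, connected, and standard with respect to P_Z with constant β. If ε_l = C (log(l)/l)^{1/d} with C > (2/(β ω_d))^{1/d}, then almost surely, for l large enough, Q ⊆ ∪_{i=1}^l B(Zᵢ, ε_l), and consequently the union ∪_{i=1}^l B(Zᵢ, ε_l) is a connected set. -/

import Mathlib

open Metric MeasureTheory Filter
open scoped ENNReal

/-- `S` is standard with respect to `μ` with constants `β, λ`. -/
def IsStandard {d : ℕ} (μ : Measure (EuclideanSpace ℝ (Fin d)))
    (S : Set (EuclideanSpace ℝ (Fin d))) (β lam : ℝ) : Prop :=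
  0 < lam ∧ ∀ x ∈ S, ∀ ε : ℝ, 0 < ε → ε ≤ lam →
    ENNReal.ofReal β * volume (Metric.ball x ε) ≤ μ (Metric.ball x ε ∩ S)

lemma exists_net_aux {d : ℕ} (x₀ : EuclideanSpace ℝ (Fin d)) {R : ℝ} (hR : 0 < R)
    {Q : Set (EuclideanSpace ℝ (Fin d))} (hQR : Q ⊆ ball x₀ R) {r : ℝ} (hr : 0 < r) :
    ∃ F : Finset (EuclideanSpace ℝ (Fin d)), ↑F ⊆ Q ∧
      (∀ x ∈ Q, ∃ y ∈ F, dist x y < r) ∧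
      (F.card : ℝ) * (r / 2) ^ d ≤ (R + r / 2) ^ d := by
  classical
  have hr2 : (0:ℝ) < r / 2 := by linarith
  have hV0 : volume (ball (0 : EuclideanSpace ℝ (Fin d)) 1) ≠ 0 :=
    (measure_ball_pos _ _ one_pos).ne'
  have hVtop : volume (ball (0 : EuclideanSpace ℝ (Fin d)) 1) ≠ ⊤ := measure_ball_lt_top.ne
  have key : ∀ F : Finset (EuclideanSpace ℝ (Fin d)), ↑F ⊆ Q →
      (∀ x ∈ F, ∀ y ∈ F, x ≠ y → r ≤ dist x y) →
      (F.card : ℝ) * (r / 2) ^ d ≤ (R + r / 2) ^ d := by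
    intro F hFQ hsep
    have hdisj : (↑F : Set (EuclideanSpace ℝ (Fin d))).PairwiseDisjoint
        (fun y => ball y (r / 2)) := by
      intro x hx y hy hxy
      exact ball_disjoint_ball (by have := hsep x hx y hy hxy; linarith)
    have h1 : ∑ y ∈ F, volume (ball y (r / 2)) ≤ volume (ball x₀ (R + r / 2)) := by
      rw [← measure_biUnion_finset hdisj (fun _ _ => measurableSet_ball)]
      refine measure_mono (Set.iUnion₂_subset fun y hy => ball_subset_ball' ?_)
      have hy' : y ∈ ball x₀ R := hQR (hFQ hy)
      rw [mem_ball] at hy'; linarith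
    rw [Finset.sum_congr rfl (fun y _ => Measure.addHaar_ball_of_pos volume y hr2),
      Measure.addHaar_ball_of_pos volume x₀ (by linarith : (0:ℝ) < R + r / 2),
      Finset.sum_const, finrank_euclideanSpace_fin, nsmul_eq_mul, ← mul_assoc] at h1
    rw [ENNReal.mul_le_mul_iff_left hV0 hVtop] at h1
    have h2 : ENNReal.ofReal ((F.card : ℝ) * (r / 2) ^ d) ≤
        ENNReal.ofReal ((R + r / 2) ^ d) := by
      rwa [ENNReal.ofReal_mul (by positivity), ENNReal.ofReal_natCast]
    exact (ENNReal.ofReal_le_ofReal_iff (by positivity)).1 h2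
  set 𝒮 : Set (Finset (EuclideanSpace ℝ (Fin d))) :=
    {F | ↑F ⊆ Q ∧ ∀ x ∈ F, ∀ y ∈ F, x ≠ y → r ≤ dist x y} with h𝒮
  set T : Set ℕ := Finset.card '' 𝒮 with hT
  have hT0 : 0 ∈ T := ⟨∅, ⟨by simp, by simp⟩, rfl⟩
  have hTbdd : BddAbove T := by
    refine ⟨⌈(R + r / 2) ^ d / (r / 2) ^ d⌉₊, ?_⟩
    rintro n ⟨F, hF, rfl⟩
    have h2 : (F.card : ℝ) ≤ (R + r / 2) ^ d / (r / 2) ^ d := by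
      rw [le_div_iff₀ (by positivity)]; exact key F hF.1 hF.2
    exact_mod_cast h2.trans (Nat.le_ceil _)
  obtain ⟨F, hF𝒮, hFcard⟩ := Nat.sSup_mem ⟨0, hT0⟩ hTbdd
  refine ⟨F, hF𝒮.1, ?_, key F hF𝒮.1 hF𝒮.2⟩
  intro x hx
  by_contra hcon
  push_neg at hcon
  have hcon' : ∀ y ∈ F, r ≤ dist x y := hcon
  have hxF : x ∉ F := by
    intro hxF
    have := hcon' x hxF
    simp at this; linarith
  have hins : insert x F ∈ 𝒮 := by
    constructor
    · intro z hz
      rcases Finset.mem_insert.1 hz with rfl | hz'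
      · exact hx
      · exact hF𝒮.1 hz'
    · intro u hu v hv huv
      rcases Finset.mem_insert.1 hu with rfl | hu' <;>
        rcases Finset.mem_insert.1 hv with rfl | hv'
      · exact absurd rfl huv
      · exact hcon' v hv'
      · rw [dist_comm]; exact hcon' u hu'
      · exact hF𝒮.2 u hu' v hv' huv
  have hmem : (insert x F).card ∈ T := ⟨_, hins, rfl⟩
  have hle := le_csSup hTbdd hmem
  rw [Finset.card_insert_of_notMem hxF, hFcard] at hle
  omega

set_option maxHeartbeats 2000000 in
/-- Remark 1: for iid `Z₁,Z₂,…` whose distribution `P_Z` has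
compact, connected support `Q` that is standard with constant `β`, if
`ε_l = C (log l / l)^{1/d}` with `C > (2/(β ω_d))^{1/d}` then a.s., for `l` large,
`Q ⊆ ⋃_{i≤l} B(Zᵢ, ε_l)` and this union is connected. -/
theorem covering_and_connected_union {d : ℕ} (hd : 0 < d) {Ω : Type*} [MeasurableSpace Ω]
    (μ : Measure Ω) [IsProbabilityMeasure μ]
    (Z : ℕ → Ω → EuclideanSpace ℝ (Fin d)) (hZ : ∀ i, Measurable (Z i))
    (PZ : Measure (EuclideanSpace ℝ (Fin d)))
    (hiid : ProbabilityTheory.iIndepFun Z μ)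
    (hdist : ∀ i, Measure.map (Z i) μ = PZ)
    (Q : Set (EuclideanSpace ℝ (Fin d)))
    -- Q is the support of P_Z
    (hQclosed : IsClosed Q) (hQnull : PZ Qᶜ = 0)
    (hQfull : ∀ x ∈ Q, ∀ r : ℝ, 0 < r → 0 < PZ (Metric.ball x r))
    (hQcomp : IsCompact Q) (hQconn : IsConnected Q)
    (β lam : ℝ) (hβ : 0 < β) (hstd : IsStandard PZ Q β lam)
    (C : ℝ)
    (hC : (2 / (β * (volume (Metric.ball (0 : EuclideanSpace ℝ (Fin d)) 1)).toReal))
            ^ ((1:ℝ)/d) < C)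
    (ε : ℕ → ℝ) (hε : ∀ l : ℕ, ε l = C * (Real.log l / l) ^ ((1:ℝ)/d)) :
    ∀ᵐ ω ∂μ, ∃ L : ℕ, ∀ l ≥ L,
      Q ⊆ (⋃ i ∈ Finset.range l, Metric.ball (Z i ω) (ε l)) ∧
      IsConnected (⋃ i ∈ Finset.range l, Metric.ball (Z i ω) (ε l)) := by
  classical
  have hPZprob : IsProbabilityMeasure PZ := by
    rw [← hdist 0]; exact Measure.isProbabilityMeasure_map (hZ 0).aemeasurable
  have hlam : 0 < lam := hstd.1
  set V := volume (Metric.ball (0 : EuclideanSpace ℝ (Fin d)) 1) with hVdef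
  have hV0 : V ≠ 0 := (measure_ball_pos _ _ one_pos).ne'
  have hVtop : V ≠ ⊤ := measure_ball_lt_top.ne
  set w : ℝ := V.toReal with hwdef
  have hw0 : 0 < w := ENNReal.toReal_pos hV0 hVtop
  have hdR : (d:ℝ) ≠ 0 := by exact_mod_cast hd.ne'
  -- C > 0 and β * w * C ^ d > 2
  have hCpos : 0 < C := lt_of_le_of_lt (Real.rpow_nonneg (by positivity) _) hC
  have hβw : 0 < β * w := by positivity
  have ha0 : 2 / (β * w) < C ^ d := by
    have h1 := Real.rpow_lt_rpow (Real.rpow_nonneg (by positivity) _) hC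
      (by positivity : (0:ℝ) < (d:ℝ))
    rw [← Real.rpow_mul (by positivity), one_div_mul_cancel hdR, Real.rpow_one,
      Real.rpow_natCast] at h1
    exact h1
  set a₀ : ℝ := β * w * C ^ d with ha₀def
  have ha₀2 : 2 < a₀ := by
    rw [div_lt_iff₀ hβw] at ha0
    rw [ha₀def]; nlinarith
  have ha₀pos : 0 < a₀ := by linarith
  set θ : ℝ := (2 / a₀ + 1) / 2 with hθdef
  have hθ0 : 0 < θ := by rw [hθdef]; positivity
  have hθ1 : θ < 1 := by
    rw [hθdef]
    have : 2 / a₀ < 1 := (div_lt_one ha₀pos).2 (by linarith)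
    linarith
  set a : ℝ := a₀ * θ with hadef
  have ha2 : 2 < a := by
    have heq : a₀ * ((2 / a₀ + 1) / 2) = (2 + a₀) / 2 := by field_simp
    rw [hadef, hθdef, heq]
    linarith
  set ρ : ℝ := θ ^ ((1:ℝ)/d) with hρdef
  have hρ0 : 0 < ρ := Real.rpow_pos_of_pos hθ0 _
  have hρ1 : ρ < 1 := Real.rpow_lt_one hθ0.le hθ1 (by positivity)
  have hρd : ρ ^ d = θ := by
    rw [hρdef, ← Real.rpow_natCast (θ ^ ((1:ℝ)/d)) d, ← Real.rpow_mul hθ0.le,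
      one_div_mul_cancel hdR, Real.rpow_one]
  set η : ℝ := 1 - ρ with hηdef
  have hη0 : 0 < η := by rw [hηdef]; linarith
  have hη1 : η ≤ 1 := by rw [hηdef]; linarith
  -- basic facts about ε
  have hlog3 : ∀ l : ℕ, 3 ≤ l → 1 ≤ Real.log l := by
    intro l hl
    have hl3 : (3:ℝ) ≤ l := by exact_mod_cast hl
    rw [Real.le_log_iff_exp_le (by linarith)]
    have := Real.exp_one_lt_d9
    linarith
  have hεpos : ∀ l : ℕ, 3 ≤ l → 0 < ε l := by
    intro l hl
    have h1 := hlog3 l hl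
    have hl3 : (3:ℝ) ≤ l := by exact_mod_cast hl
    rw [hε]
    have : (0:ℝ) < Real.log l / l := div_pos (by linarith) (by linarith)
    positivity
  have hεpow : ∀ l : ℕ, 3 ≤ l → ε l ^ d = C ^ d * (Real.log l / l) := by
    intro l hl
    have h1 := hlog3 l hl
    have hl3 : (3:ℝ) ≤ l := by exact_mod_cast hl
    have hgl : (0:ℝ) ≤ Real.log l / l := div_nonneg (by linarith) (by linarith)
    rw [hε, mul_pow, ← Real.rpow_natCast ((Real.log l / ↑l) ^ ((1:ℝ)/d)) d,
      ← Real.rpow_mul hgl, one_div_mul_cancel hdR, Real.rpow_one]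
  -- ε tends to 0
  have hεto0 : Tendsto ε atTop (nhds 0) := by
    have hg0 : Tendsto (fun l : ℕ => Real.log l / l) atTop (nhds 0) := by
      have h1 := Real.tendsto_pow_log_div_mul_add_atTop 1 0 1 one_ne_zero
      simp only [pow_one, one_mul, add_zero] at h1
      exact h1.comp tendsto_natCast_atTop_atTop
    have hcont : ContinuousAt (fun x : ℝ => C * x ^ ((1:ℝ)/d)) 0 :=
      continuousAt_const.mul (Real.continuousAt_rpow_const 0 _ (Or.inr (by positivity)))
    have h2 := hcont.tendsto.comp hg0
    simp only [Function.comp_def,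
      Real.zero_rpow (by positivity : (0:ℝ) < (1:ℝ)/d).ne', mul_zero] at h2
    exact h2.congr fun l => (hε l).symm
  -- choose L₁
  have hεsmall : ∀ᶠ l : ℕ in atTop, ε l < min lam 1 :=
    hεto0.eventually_lt_const (lt_min hlam one_pos)
  obtain ⟨L₁', hL₁'⟩ := eventually_atTop.1 hεsmall
  set L₁ : ℕ := max L₁' 3 with hL₁def
  have hL₁3 : 3 ≤ L₁ := le_max_right _ _
  -- big ball around Q
  obtain ⟨R, hR0, hQR⟩ := hQcomp.isBounded.subset_ball_lt 0 0
  -- nets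
  have hnet : ∀ l : ℕ, 3 ≤ l → ∃ F : Finset (EuclideanSpace ℝ (Fin d)), ↑F ⊆ Q ∧
      (∀ x ∈ Q, ∃ y ∈ F, dist x y < η * ε l) ∧
      (F.card : ℝ) * (η * ε l / 2) ^ d ≤ (R + η * ε l / 2) ^ d := by
    intro l hl
    exact exists_net_aux 0 hR0 hQR (by have := hεpos l hl; positivity)
  set F : ℕ → Finset (EuclideanSpace ℝ (Fin d)) :=
    fun l => if h : 3 ≤ l then (hnet l h).choose else ∅ with hFdef
  set S : ℕ → Set Ω := fun l => if L₁ ≤ l then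
      ⋃ y ∈ F l, ⋂ i ∈ Finset.range l, Z i ⁻¹' (Metric.ball y (ρ * ε l))ᶜ
    else ∅ with hSdef
  set K₃ : ℝ := (R + 1) ^ d * 2 ^ d / (η ^ d * C ^ d) with hK₃def
  have hK₃0 : 0 ≤ K₃ := by rw [hK₃def]; positivity
  -- pointwise measure bound
  have hpoint : ∀ l : ℕ, L₁ ≤ l → ∀ y ∈ Q,
      μ (⋂ i ∈ Finset.range l, Z i ⁻¹' (Metric.ball y (ρ * ε l))ᶜ) ≤
        ENNReal.ofReal ((l:ℝ) ^ (-a)) := by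
    intro l hl y hyQ
    have hl3 : 3 ≤ l := le_trans hL₁3 hl
    have hl3R : (3:ℝ) ≤ l := by exact_mod_cast hl3
    have hlpos : (0:ℝ) < l := by linarith
    have hεl : 0 < ε l := hεpos l hl3
    have hεlam : ε l ≤ lam :=
      le_trans (le_of_lt (lt_of_lt_of_le (hL₁' l (le_trans (le_max_left _ _) hl))
        (min_le_left _ _))) le_rfl
    have hspos : 0 < ρ * ε l := by positivity
    have hslam : ρ * ε l ≤ lam := le_trans (by nlinarith) hεlam
    set q : ℝ := (PZ (Metric.ball y (ρ * ε l))).toReal with hqdef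
    have hq0 : 0 ≤ q := ENNReal.toReal_nonneg
    have hq1 : q ≤ 1 := by
      rw [hqdef]
      have := prob_le_one (μ := PZ) (s := Metric.ball y (ρ * ε l))
      have h := ENNReal.toReal_mono ENNReal.one_ne_top this
      simpa using h
    -- lower bound on q
    have hq_lb : a * (Real.log l / l) ≤ q := by
      have hstd2 := hstd.2 y hyQ (ρ * ε l) hspos hslam
      have hsub : PZ (Metric.ball y (ρ * ε l) ∩ Q) ≤ PZ (Metric.ball y (ρ * ε l)) :=
        measure_mono Set.inter_subset_left
      have hball : volume (Metric.ball y (ρ * ε l)) =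
          ENNReal.ofReal ((ρ * ε l) ^ d) * V := by
        rw [Measure.addHaar_ball_of_pos volume y hspos, finrank_euclideanSpace_fin, hVdef]
      have h5 : ENNReal.ofReal β * (ENNReal.ofReal ((ρ * ε l) ^ d) * V) ≤
          PZ (Metric.ball y (ρ * ε l)) := by
        rw [← hball]; exact hstd2.trans hsub
      have h6 := ENNReal.toReal_mono (measure_ne_top PZ _) h5
      rw [ENNReal.toReal_mul, ENNReal.toReal_mul, ENNReal.toReal_ofReal hβ.le,
        ENNReal.toReal_ofReal (by positivity)] at h6
      have hs_pow : (ρ * ε l) ^ d = θ * (C ^ d * (Real.log l / l)) := by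
        rw [mul_pow, hρd, hεpow l hl3]
      rw [hs_pow, ← hwdef] at h6
      calc a * (Real.log l / l) = β * (θ * (C ^ d * (Real.log l / ↑l)) * w) := by
            rw [hadef, ha₀def]; ring
        _ ≤ q := h6
    -- product formula
    have hprod : μ (⋂ i ∈ Finset.range l, Z i ⁻¹' (Metric.ball y (ρ * ε l))ᶜ) =
        (PZ (Metric.ball y (ρ * ε l))ᶜ) ^ l := by
      rw [hiid.measure_inter_preimage_eq_mul (Finset.range l)
        (fun i _ => measurableSet_ball.compl)]
      rw [Finset.prod_congr rfl (fun i _ => by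
        rw [← Measure.map_apply (hZ i) measurableSet_ball.compl, hdist i]),
        Finset.prod_const, Finset.card_range]
    have hcompl : PZ (Metric.ball y (ρ * ε l))ᶜ = ENNReal.ofReal (1 - q) := by
      rw [measure_compl measurableSet_ball (measure_ne_top _ _), measure_univ,
        ENNReal.ofReal_sub 1 hq0, ENNReal.ofReal_one, hqdef,
        ENNReal.ofReal_toReal (measure_ne_top _ _)]
    rw [hprod, hcompl, ← ENNReal.ofReal_pow (by linarith : (0:ℝ) ≤ 1 - q)]
    apply ENNReal.ofReal_le_ofReal
    have h7 : a * Real.log l ≤ q * (l:ℝ) := by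
      have heq : a * Real.log l = (a * (Real.log l / l)) * l := by field_simp
      rw [heq]
      exact mul_le_mul_of_nonneg_right hq_lb (le_of_lt hlpos)
    calc (1 - q) ^ l ≤ Real.exp (-q) ^ l :=
          pow_le_pow_left₀ (by linarith) (by linarith [Real.add_one_le_exp (-q)]) l
      _ = Real.exp ((l:ℝ) * (-q)) := (Real.exp_nat_mul _ l).symm
      _ ≤ Real.exp (-(a * Real.log l)) := Real.exp_le_exp.2 (by linarith)
      _ = (l:ℝ) ^ (-a) := by rw [Real.rpow_def_of_pos hlpos]; congr 1; ring
  -- cardinality bound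
  have hcard : ∀ l : ℕ, L₁ ≤ l → ((F l).card : ℝ) ≤ K₃ * l := by
    intro l hl
    have hl3 : 3 ≤ l := le_trans hL₁3 hl
    have hl3R : (3:ℝ) ≤ l := by exact_mod_cast hl3
    have hlpos : (0:ℝ) < l := by linarith
    have hεl : 0 < ε l := hεpos l hl3
    have hε1 : ε l ≤ 1 :=
      le_of_lt (lt_of_lt_of_le (hL₁' l (le_trans (le_max_left _ _) hl)) (min_le_right _ _))
    have hlog1 : 1 ≤ Real.log l := hlog3 l hl3
    have hlogpos : (0:ℝ) < Real.log l := by linarith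
    have hFl : F l = (hnet l hl3).choose := dif_pos hl3
    have hFcard := (hnet l hl3).choose_spec.2.2
    rw [← hFl] at hFcard
    set r : ℝ := η * ε l with hrdef
    have hr0 : 0 < r := by rw [hrdef]; positivity
    have hr1 : r ≤ 1 := by rw [hrdef]; nlinarith
    have h8 : ((F l).card : ℝ) * (r / 2) ^ d ≤ (R + 1) ^ d :=
      hFcard.trans (pow_le_pow_left₀ (by positivity) (by linarith) d)
    have h9 : (r / 2) ^ d = η ^ d * C ^ d * (Real.log l / l) / 2 ^ d := by
      rw [div_pow, hrdef, mul_pow, hεpow l hl3]; ring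
    rw [h9] at h8
    have hq' : (0:ℝ) < η ^ d * C ^ d * (Real.log l / l) / 2 ^ d :=
      div_pos (mul_pos (mul_pos (pow_pos hη0 d) (pow_pos hCpos d))
        (div_pos hlogpos hlpos)) (pow_pos two_pos d)
    have h10 : ((F l).card : ℝ) ≤ (R + 1) ^ d / (η ^ d * C ^ d * (Real.log l / l) / 2 ^ d) :=
      (le_div_iff₀ hq').2 h8
    have h11 : (R + 1) ^ d / (η ^ d * C ^ d * (Real.log l / l) / 2 ^ d) =
        K₃ * ((l:ℝ) / Real.log l) := by
      rw [hK₃def]; field_simp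
    have h12 : K₃ * ((l:ℝ) / Real.log l) ≤ K₃ * l :=
      mul_le_mul_of_nonneg_left (div_le_self (by linarith) hlog1) hK₃0
    rw [h11] at h10
    linarith
  -- measure of S l
  have hμS : ∀ l : ℕ, μ (S l) ≤ ENNReal.ofReal (K₃ * (l:ℝ) ^ (1 - a)) := by
    intro l
    by_cases hl : L₁ ≤ l
    · have hl3 : 3 ≤ l := le_trans hL₁3 hl
      have hlpos : (0:ℝ) < l := by
        have : (3:ℝ) ≤ l := by exact_mod_cast hl3
        linarith
      have hFl : F l = (hnet l hl3).choose := dif_pos hl3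
      have hFQ := (hnet l hl3).choose_spec.1
      rw [← hFl] at hFQ
      have hSl : S l = ⋃ y ∈ F l, ⋂ i ∈ Finset.range l,
          Z i ⁻¹' (Metric.ball y (ρ * ε l))ᶜ := by rw [hSdef]; simp [hl]
      rw [hSl]
      calc μ (⋃ y ∈ F l, ⋂ i ∈ Finset.range l, Z i ⁻¹' (Metric.ball y (ρ * ε l))ᶜ)
          ≤ ∑ y ∈ F l, μ (⋂ i ∈ Finset.range l, Z i ⁻¹' (Metric.ball y (ρ * ε l))ᶜ) :=
            measure_biUnion_finset_le _ _
        _ ≤ ∑ _y ∈ F l, ENNReal.ofReal ((l:ℝ) ^ (-a)) :=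
            Finset.sum_le_sum fun y hy => hpoint l hl y (hFQ hy)
        _ = (F l).card • ENNReal.ofReal ((l:ℝ) ^ (-a)) := Finset.sum_const _
        _ = ENNReal.ofReal (((F l).card : ℝ) * (l:ℝ) ^ (-a)) := by
            rw [nsmul_eq_mul, ← ENNReal.ofReal_natCast, ← ENNReal.ofReal_mul (Nat.cast_nonneg _)]
        _ ≤ ENNReal.ofReal (K₃ * (l:ℝ) ^ (1 - a)) := by
            apply ENNReal.ofReal_le_ofReal
            have h13 : (l:ℝ) ^ (1 - a) = (l:ℝ) * (l:ℝ) ^ (-a) := by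
              rw [show (1:ℝ) - a = 1 + (-a) by ring, Real.rpow_add hlpos, Real.rpow_one]
            rw [h13, ← mul_assoc]
            exact mul_le_mul_of_nonneg_right (hcard l hl) (Real.rpow_nonneg (by linarith) _)
    · have : S l = ∅ := by rw [hSdef]; simp [hl]
      rw [this]
      simp only [measure_empty]
      exact zero_le
  -- summability
  have hsum : (∑' l : ℕ, μ (S l)) ≠ ⊤ := by
    have hsummable : Summable (fun l : ℕ => K₃ * (l:ℝ) ^ (1 - a)) :=
      (Real.summable_nat_rpow.2 (by linarith)).mul_left K₃
    have h14 : (∑' l : ℕ, μ (S l)) ≤ ∑' l : ℕ, ENNReal.ofReal (K₃ * (l:ℝ) ^ (1 - a)) :=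
      ENNReal.tsum_le_tsum hμS
    have h15 : (∑' l : ℕ, ENNReal.ofReal (K₃ * (l:ℝ) ^ (1 - a))) ≠ ⊤ := by
      rw [← ENNReal.ofReal_tsum_of_nonneg (fun l => by positivity) hsummable]
      exact ENNReal.ofReal_ne_top
    exact ne_top_of_le_ne_top h15 h14
  -- a.s. all samples in Q
  have hE1 : ∀ᵐ ω ∂μ, ∀ i, Z i ω ∈ Q := by
    rw [ae_all_iff]
    intro i
    have h16 : μ (Z i ⁻¹' Qᶜ) = 0 := by
      rw [← Measure.map_apply (hZ i) hQclosed.measurableSet.compl, hdist i]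
      exact hQnull
    rw [ae_iff]
    convert h16 using 2
    rfl
  -- conclusion
  filter_upwards [hE1, ae_eventually_notMem hsum] with ω h1 h2
  obtain ⟨L₂, hL₂⟩ := eventually_atTop.1 h2
  refine ⟨max L₁ L₂, fun l hl => ?_⟩
  have hlL₁ : L₁ ≤ l := le_trans (le_max_left _ _) hl
  have hlL₂ : L₂ ≤ l := le_trans (le_max_right _ _) hl
  have hl3 : 3 ≤ l := le_trans hL₁3 hlL₁
  have hεl : 0 < ε l := hεpos l hl3
  have hωS := hL₂ l hlL₂
  have hSl : S l = ⋃ y ∈ F l, ⋂ i ∈ Finset.range l,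
      Z i ⁻¹' (Metric.ball y (ρ * ε l))ᶜ := by rw [hSdef]; simp [hlL₁]
  rw [hSl] at hωS
  have hFl : F l = (hnet l hl3).choose := dif_pos hl3
  have hFnet := (hnet l hl3).choose_spec.2.1
  rw [← hFl] at hFnet
  have hcov : Q ⊆ ⋃ i ∈ Finset.range l, Metric.ball (Z i ω) (ε l) := by
    intro x hx
    obtain ⟨y, hyF, hyx⟩ := hFnet x hx
    have h17 : ω ∉ ⋂ i ∈ Finset.range l, Z i ⁻¹' (Metric.ball y (ρ * ε l))ᶜ := by
      intro hmem
      exact hωS (Set.mem_biUnion hyF hmem)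
    simp only [Set.mem_iInter, Set.mem_preimage, Set.mem_compl_iff, not_forall, not_not] at h17
    obtain ⟨i, hi, hZi⟩ := h17
    refine Set.mem_biUnion hi ?_
    rw [mem_ball] at hZi ⊢
    calc dist x (Z i ω) ≤ dist x y + dist (Z i ω) y := by
          rw [dist_comm (Z i ω) y]; exact dist_triangle x y (Z i ω)
      _ < η * ε l + ρ * ε l := add_lt_add hyx hZi
      _ = ε l := by rw [hηdef]; ring
  refine ⟨hcov, ?_⟩
  -- connectedness
  have hUeq : (⋃ i ∈ Finset.range l, Metric.ball (Z i ω) (ε l)) =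
      ⋃ i ∈ Finset.range l, (Q ∪ Metric.ball (Z i ω) (ε l)) := by
    apply Set.Subset.antisymm
    · exact Set.iUnion₂_mono fun i hi => Set.subset_union_right
    · intro x hx
      simp only [Set.mem_iUnion, Set.mem_union, exists_prop] at hx
      obtain ⟨i, hi, hx | hx⟩ := hx
      · exact hcov hx
      · exact Set.mem_biUnion hi hx
  obtain ⟨q₀, hq₀⟩ := hQconn.nonempty
  rw [hUeq]
  have h0l : 0 ∈ Finset.range l := Finset.mem_range.2 (by omega)
  constructor
  · exact ⟨q₀, Set.mem_biUnion h0l (Or.inl hq₀)⟩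
  · rw [← Finset.set_biUnion_coe, ← Set.sUnion_image]
    apply isPreconnected_sUnion q₀
    · rintro t ⟨i, hi, rfl⟩
      exact Or.inl hq₀
    · rintro t ⟨i, hi, rfl⟩
      exact (IsConnected.union ⟨Z i ω, h1 i, mem_ball_self hεl⟩ hQconn
        ((convex_ball _ _).isConnected ⟨Z i ω, mem_ball_self hεl⟩)).isPreconnected
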